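/- arXiv:1711.11066 — 4 statements merged into one kernel-verified Lean document; each statement's English description precedes it below -/
import Mathlib

section
/- Suppose a classifier C satisfies ε-fair treatment and ε-predictive parity with respect to a classification context P. Then for any two groups X, Y and any two classes i, j that are ambiguous with respect to C (i.e., there exists an outcome o with Pr[f(σ)=i ∧ C(O(σ))=o] > 0 and Pr[f(σ)=j ∧ C(O(σ))=o] > 0), letting α_c^G = Pr[f(σ_G)=c] denote the base rate of class c in group G, we have μ(α_i^X/α_i^Y, α_j^X/α_j^Y) ≤ 4ε. -/
open scoped Classical
open Finset

/-- Multiplicative distance between nonnegative reals, valued in `ℝ≥0∞`. -/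
noncomputable def mdist (x y : ℝ) : ENNReal :=
  if x = 0 ∧ y = 0 then 0
  else if 0 < x ∧ 0 < y then ENNReal.ofReal (Real.log (max (x / y) (y / x)))
  else ⊤

/-- Probability of an event `E` under a finitely supported distribution `D`. -/
noncomputable def pr {S : Type} [Fintype S] (D : S → ℝ) (E : S → Prop) : ℝ :=
  ∑ σ, if E σ then D σ else 0

/-- Conditional probability `Pr[A | B]`, with the convention that it is `0`
when `Pr[B] = 0` (division by zero). -/
noncomputable def cpr {S : Type} [Fintype S] (D : S → ℝ) (A B : S → Prop) : ℝ :=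
  pr D (fun σ => A σ ∧ B σ) / pr D B

/-- `D` is a probability mass function. -/
def IsProb {S : Type} [Fintype S] (D : S → ℝ) : Prop :=
  (∀ σ, 0 ≤ D σ) ∧ ∑ σ, D σ = 1

/-- `ε`-fair treatment: conditioned on each class, the classifier's outcome
distribution is `ε`-close (multiplicatively) between any two groups. -/
def FairTreatment {S Ψ G Θ Ω : Type} [Fintype S] (D : S → ℝ) (f : S → Ψ) (g : S → G)
    (O : S → Θ) (C : Θ → Ω) (ε : ℝ) : Prop :=
  ∀ (X Y : G) (c : Ψ) (o : Ω),
    mdist (cpr D (fun σ => C (O σ) = o) (fun σ => f σ = c ∧ g σ = X))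
          (cpr D (fun σ => C (O σ) = o) (fun σ => f σ = c ∧ g σ = Y)) ≤ ENNReal.ofReal ε

/-- `ε`-predictive parity: conditioned on each outcome, the class distribution
is `ε`-close (multiplicatively) between any two groups. -/
def PredParity {S Ψ G Θ Ω : Type} [Fintype S] (D : S → ℝ) (f : S → Ψ) (g : S → G)
    (O : S → Θ) (C : Θ → Ω) (ε : ℝ) : Prop :=
  ∀ (X Y : G) (o : Ω) (c : Ψ),
    mdist (cpr D (fun σ => f σ = c) (fun σ => C (O σ) = o ∧ g σ = X))
          (cpr D (fun σ => f σ = c) (fun σ => C (O σ) = o ∧ g σ = Y)) ≤ ENNReal.ofReal ε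

/-- Classes `i` and `j` are ambiguous w.r.t. classifier `C`: some outcome arises
with positive probability together with each of the two classes. -/
def Ambiguous {S Ψ Θ Ω : Type} [Fintype S] (D : S → ℝ) (f : S → Ψ)
    (O : S → Θ) (C : Θ → Ω) (i j : Ψ) : Prop :=
  ∃ o : Ω, 0 < pr D (fun σ => f σ = i ∧ C (O σ) = o) ∧
           0 < pr D (fun σ => f σ = j ∧ C (O σ) = o)

/-- Subgroup perfect prediction: there is a proper nonempty subset `ψ` of classes
such that the outcome distributions conditioned on `ψ` and on its complement
have disjoint supports. -/
def SubgroupPP {S Ψ Θ Ω : Type} [Fintype S] (D : S → ℝ) (f : S → Ψ)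
    (O : S → Θ) (C : Θ → Ω) : Prop :=
  ∃ ψ : Set Ψ, ψ.Nonempty ∧ ψ ≠ Set.univ ∧
    ∀ o : Ω, ¬ (0 < pr D (fun σ => f σ ∈ ψ ∧ C (O σ) = o) ∧
                0 < pr D (fun σ => f σ ∉ ψ ∧ C (O σ) = o))

section Aux
variable {S : Type} [Fintype S]

lemma pr_nonneg' (D : S → ℝ) (hD : ∀ σ, 0 ≤ D σ) (E : S → Prop) : 0 ≤ pr D E :=
  Finset.sum_nonneg fun σ _ => by by_cases h : E σ <;> simp [h, hD σ]

lemma pr_mono' (D : S → ℝ) (hD : ∀ σ, 0 ≤ D σ) {A B : S → Prop}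
    (h : ∀ σ, A σ → B σ) : pr D A ≤ pr D B := by
  apply Finset.sum_le_sum
  intro σ _
  by_cases hA : A σ
  · simp [hA, h σ hA]
  · by_cases hB : B σ <;> simp [hA, hB, hD σ]

lemma pr_congr' (D : S → ℝ) {A B : S → Prop} (h : ∀ σ, A σ ↔ B σ) :
    pr D A = pr D B :=
  Finset.sum_congr rfl fun σ _ => if_congr (h σ) rfl rfl

lemma pr_pos_of_witness (D : S → ℝ) (hD : ∀ σ, 0 ≤ D σ) {E : S → Prop}
    (σ₀ : S) (hE : E σ₀) (h : 0 < D σ₀) : 0 < pr D E := by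
  have hle : (if E σ₀ then D σ₀ else 0) ≤ pr D E :=
    Finset.single_le_sum (f := fun σ => if E σ then D σ else 0)
      (fun σ _ => by by_cases hh : E σ <;> simp [hh, hD σ]) (Finset.mem_univ σ₀)
  rw [if_pos hE] at hle
  exact lt_of_lt_of_le h hle

lemma exists_of_pr_pos (D : S → ℝ) {E : S → Prop} (h : 0 < pr D E) :
    ∃ σ, E σ ∧ 0 < D σ := by
  by_contra hc
  push_neg at hc
  have : pr D E ≤ 0 := Finset.sum_nonpos fun σ _ => by
    by_cases hE : E σ
    · simpa [hE] using hc σ hE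
    · simp [hE]
  linarith

lemma cpr_nonneg' (D : S → ℝ) (hD : ∀ σ, 0 ≤ D σ) (A B : S → Prop) :
    0 ≤ cpr D A B :=
  div_nonneg (pr_nonneg' D hD _) (pr_nonneg' D hD _)

lemma cpr_pos' (D : S → ℝ) (hD : ∀ σ, 0 ≤ D σ) {A B : S → Prop}
    (h : 0 < pr D (fun σ => A σ ∧ B σ)) : 0 < cpr D A B :=
  div_pos h (lt_of_lt_of_le h (pr_mono' D hD fun σ hh => hh.2))

lemma pr_and_pos_of_cpr_pos (D : S → ℝ) (hD : ∀ σ, 0 ≤ D σ) {A B : S → Prop}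
    (h : 0 < cpr D A B) : 0 < pr D (fun σ => A σ ∧ B σ) := by
  rcases (pr_nonneg' D hD (fun σ => A σ ∧ B σ)).lt_or_eq with h' | h'
  · exact h'
  · exfalso; rw [cpr, ← h', zero_div] at h; exact lt_irrefl 0 h

end Aux

lemma mdist_le_of_bounds {x y ε : ℝ} (hx : 0 < x) (hy : 0 < y)
    (h1 : x ≤ Real.exp ε * y) (h2 : y ≤ Real.exp ε * x) :
    mdist x y ≤ ENNReal.ofReal ε := by
  rw [mdist, if_neg (fun hc => hx.ne' hc.1), if_pos ⟨hx, hy⟩]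
  apply ENNReal.ofReal_le_ofReal
  have hM : 0 < max (x / y) (y / x) := lt_max_of_lt_left (div_pos hx hy)
  rw [Real.log_le_iff_le_exp hM, max_le_iff]
  exact ⟨(div_le_iff₀ hy).mpr h1, (div_le_iff₀ hx).mpr h2⟩

lemma bounds_of_mdist_le {x y ε : ℝ} (hx : 0 < x) (hy : 0 < y) (hε : 0 ≤ ε)
    (h : mdist x y ≤ ENNReal.ofReal ε) :
    x ≤ Real.exp ε * y ∧ y ≤ Real.exp ε * x := by
  rw [mdist, if_neg (fun hc => hx.ne' hc.1), if_pos ⟨hx, hy⟩,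
    ENNReal.ofReal_le_ofReal_iff hε] at h
  have hM : 0 < max (x / y) (y / x) := lt_max_of_lt_left (div_pos hx hy)
  rw [Real.log_le_iff_le_exp hM, max_le_iff] at h
  exact ⟨(div_le_iff₀ hy).mp h.1, (div_le_iff₀ hx).mp h.2⟩

lemma pos_of_mdist_le {x y ε : ℝ} (hx : 0 ≤ x) (hy : 0 < y)
    (h : mdist x y ≤ ENNReal.ofReal ε) : 0 < x := by
  rcases hx.lt_or_eq with h' | h'
  · exact h'
  · exfalso
    rw [mdist, if_neg (fun hc => hy.ne' hc.2),
      if_neg (fun hc => absurd hc.1 (by rw [← h']; exact lt_irrefl 0))] at h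
    exact ENNReal.ofReal_ne_top (top_le_iff.mp h)

lemma cross_ineq {a b c d e : ℝ} (hb : 0 < b) (hd : 0 < d)
    (h : a / b ≤ e * (c / d)) : a * d ≤ e * c * b := by
  have h' : a / b ≤ e * c / d := by rw [mul_div_assoc]; exact h
  exact (div_le_div_iff₀ hb hd).mp h'

lemma one_dir {E n1X n1Y n2X n2Y a1X a1Y a2X a2Y mX mY bX bY : ℝ}
    (hn1X : 0 < n1X) (hn1Y : 0 < n1Y) (hn2X : 0 < n2X) (hn2Y : 0 < n2Y)
    (ha1X : 0 < a1X) (ha1Y : 0 < a1Y) (ha2X : 0 < a2X) (ha2Y : 0 < a2Y)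
    (hmX : 0 < mX) (hmY : 0 < mY) (hbX : 0 < bX) (hbY : 0 < bY) (hE : 0 < E)
    (h1 : n1Y * a1X ≤ E * n1X * a1Y)
    (h2 : n2X * a2Y ≤ E * n2Y * a2X)
    (h3 : n1X * mY ≤ E * n1Y * mX)
    (h4 : n2Y * mX ≤ E * n2X * mY) :
    a1X / bX / (a1Y / bY) ≤ E ^ 4 * (a2X / bX / (a2Y / bY)) := by
  have hK : 0 < n1X * n1Y * n2X * n2Y * mX * mY := by positivity
  have key : a1X * a2Y ≤ E ^ 4 * (a2X * a1Y) := by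
    have prod : (n1Y * a1X) * (n2X * a2Y) * (n1X * mY) * (n2Y * mX) ≤
        (E * n1X * a1Y) * (E * n2Y * a2X) * (E * n1Y * mX) * (E * n2X * mY) := by
      gcongr <;> positivity
    have calc1 : a1X * a2Y * (n1X * n1Y * n2X * n2Y * mX * mY) ≤
        E ^ 4 * (a2X * a1Y) * (n1X * n1Y * n2X * n2Y * mX * mY) := by
      calc a1X * a2Y * (n1X * n1Y * n2X * n2Y * mX * mY)
          = (n1Y * a1X) * (n2X * a2Y) * (n1X * mY) * (n2Y * mX) := by ring
        _ ≤ (E * n1X * a1Y) * (E * n2Y * a2X) * (E * n1Y * mX) * (E * n2X * mY) := prod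
        _ = E ^ 4 * (a2X * a1Y) * (n1X * n1Y * n2X * n2Y * mX * mY) := by ring
    exact le_of_mul_le_mul_right calc1 hK
  have eq1 : a1X / bX / (a1Y / bY) = a1X * bY / (a1Y * bX) := by
    field_simp
  have eq2 : a2X / bX / (a2Y / bY) = a2X * bY / (a2Y * bX) := by
    field_simp
  rw [eq1, eq2, ← mul_div_assoc, div_le_div_iff₀ (by positivity) (by positivity)]
  nlinarith [mul_le_mul_of_nonneg_right key (mul_pos hbX hbY).le]

theorem base_rate_ratio_of_ambiguous {S Ψ G Θ Ω : Type} [Fintype S]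
    (D : S → ℝ) (hD : IsProb D) (f : S → Ψ) (g : S → G) (O : S → Θ) (C : Θ → Ω)
    (ε : ℝ) (hε : 0 ≤ ε)
    (hft : FairTreatment D f g O C ε) (hpp : PredParity D f g O C ε)
    (i j : Ψ) (hamb : Ambiguous D f O C i j) (X Y : G) :
    mdist (cpr D (fun σ => f σ = i) (fun σ => g σ = X) /
             cpr D (fun σ => f σ = i) (fun σ => g σ = Y))
          (cpr D (fun σ => f σ = j) (fun σ => g σ = X) /
             cpr D (fun σ => f σ = j) (fun σ => g σ = Y))
      ≤ ENNReal.ofReal (4 * ε) := by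
  obtain ⟨hDnn, -⟩ := hD
  obtain ⟨o, hio, hjo⟩ := hamb
  -- every group has positive joint probability with each ambiguous class and o
  have key : ∀ c : Ψ, 0 < pr D (fun σ => f σ = c ∧ C (O σ) = o) →
      ∀ Z : G, 0 < pr D (fun σ => C (O σ) = o ∧ (f σ = c ∧ g σ = Z)) := by
    intro c hc Z
    obtain ⟨σ₀, ⟨hfc, hco⟩, hD0⟩ := exists_of_pr_pos D hc
    have h0 : 0 < pr D (fun σ => C (O σ) = o ∧ (f σ = c ∧ g σ = g σ₀)) :=
      pr_pos_of_witness D hDnn σ₀ ⟨hco, hfc, rfl⟩ hD0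
    have hG0 : 0 < cpr D (fun σ => C (O σ) = o) (fun σ => f σ = c ∧ g σ = g σ₀) :=
      cpr_pos' D hDnn h0
    have hZ : 0 < cpr D (fun σ => C (O σ) = o) (fun σ => f σ = c ∧ g σ = Z) :=
      pos_of_mdist_le (cpr_nonneg' D hDnn _ _) hG0 (hft Z (g σ₀) c o)
    exact pr_and_pos_of_cpr_pos D hDnn hZ
  have hniX := key i hio X
  have hniY := key i hio Y
  have hnjX := key j hjo X
  have hnjY := key j hjo Y
  -- names
  set niX := pr D (fun σ => C (O σ) = o ∧ (f σ = i ∧ g σ = X)) with hniX_def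
  set niY := pr D (fun σ => C (O σ) = o ∧ (f σ = i ∧ g σ = Y)) with hniY_def
  set njX := pr D (fun σ => C (O σ) = o ∧ (f σ = j ∧ g σ = X)) with hnjX_def
  set njY := pr D (fun σ => C (O σ) = o ∧ (f σ = j ∧ g σ = Y)) with hnjY_def
  have haiX : 0 < pr D (fun σ => f σ = i ∧ g σ = X) :=
    lt_of_lt_of_le hniX (pr_mono' D hDnn fun σ h => h.2)
  have haiY : 0 < pr D (fun σ => f σ = i ∧ g σ = Y) :=
    lt_of_lt_of_le hniY (pr_mono' D hDnn fun σ h => h.2)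
  have hajX : 0 < pr D (fun σ => f σ = j ∧ g σ = X) :=
    lt_of_lt_of_le hnjX (pr_mono' D hDnn fun σ h => h.2)
  have hajY : 0 < pr D (fun σ => f σ = j ∧ g σ = Y) :=
    lt_of_lt_of_le hnjY (pr_mono' D hDnn fun σ h => h.2)
  have hmX : 0 < pr D (fun σ => C (O σ) = o ∧ g σ = X) :=
    lt_of_lt_of_le hniX (pr_mono' D hDnn fun σ h => ⟨h.1, h.2.2⟩)
  have hmY : 0 < pr D (fun σ => C (O σ) = o ∧ g σ = Y) :=
    lt_of_lt_of_le hniY (pr_mono' D hDnn fun σ h => ⟨h.1, h.2.2⟩)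
  have hbX : 0 < pr D (fun σ => g σ = X) :=
    lt_of_lt_of_le haiX (pr_mono' D hDnn fun σ h => h.2)
  have hbY : 0 < pr D (fun σ => g σ = Y) :=
    lt_of_lt_of_le haiY (pr_mono' D hDnn fun σ h => h.2)
  set aiX := pr D (fun σ => f σ = i ∧ g σ = X)
  set aiY := pr D (fun σ => f σ = i ∧ g σ = Y)
  set ajX := pr D (fun σ => f σ = j ∧ g σ = X)
  set ajY := pr D (fun σ => f σ = j ∧ g σ = Y)
  set mX := pr D (fun σ => C (O σ) = o ∧ g σ = X)
  set mY := pr D (fun σ => C (O σ) = o ∧ g σ = Y)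
  set bX := pr D (fun σ => g σ = X)
  set bY := pr D (fun σ => g σ = Y)
  -- fair treatment cprs
  have hfti := bounds_of_mdist_le (div_pos hniX haiX) (div_pos hniY haiY) hε (hft X Y i o)
  have hftj := bounds_of_mdist_le (div_pos hnjX hajX) (div_pos hnjY hajY) hε (hft X Y j o)
  -- predictive parity cprs: rewrite numerator event order
  have eiX : pr D (fun σ => f σ = i ∧ (C (O σ) = o ∧ g σ = X)) = niX :=
    pr_congr' D (fun σ => by tauto)
  have eiY : pr D (fun σ => f σ = i ∧ (C (O σ) = o ∧ g σ = Y)) = niY :=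
    pr_congr' D (fun σ => by tauto)
  have ejX : pr D (fun σ => f σ = j ∧ (C (O σ) = o ∧ g σ = X)) = njX :=
    pr_congr' D (fun σ => by tauto)
  have ejY : pr D (fun σ => f σ = j ∧ (C (O σ) = o ∧ g σ = Y)) = njY :=
    pr_congr' D (fun σ => by tauto)
  have hppi' := hpp X Y o i
  have hppj' := hpp X Y o j
  simp only [cpr, eiX, eiY, ejX, ejY] at hppi' hppj'
  have hppi := bounds_of_mdist_le (div_pos hniX hmX) (div_pos hniY hmY) hε hppi'
  have hppj := bounds_of_mdist_le (div_pos hnjX hmX) (div_pos hnjY hmY) hε hppj'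
  -- convert to cross form
  have cR1 : niX * aiY ≤ Real.exp ε * niY * aiX := cross_ineq haiX haiY hfti.1
  have cR2 : niY * aiX ≤ Real.exp ε * niX * aiY := cross_ineq haiY haiX hfti.2
  have cR3 : njX * ajY ≤ Real.exp ε * njY * ajX := cross_ineq hajX hajY hftj.1
  have cR4 : njY * ajX ≤ Real.exp ε * njX * ajY := cross_ineq hajY hajX hftj.2
  have cP1 : niX * mY ≤ Real.exp ε * niY * mX := cross_ineq hmX hmY hppi.1
  have cP2 : niY * mX ≤ Real.exp ε * niX * mY := cross_ineq hmY hmX hppi.2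
  have cP3 : njX * mY ≤ Real.exp ε * njY * mX := cross_ineq hmX hmY hppj.1
  have cP4 : njY * mX ≤ Real.exp ε * njX * mY := cross_ineq hmY hmX hppj.2
  have hE : 0 < Real.exp ε := Real.exp_pos ε
  have hE4 : Real.exp ε ^ 4 = Real.exp (4 * ε) := by
    rw [← Real.exp_nat_mul]; norm_num
  have b1 : aiX / bX / (aiY / bY) ≤ Real.exp (4 * ε) * (ajX / bX / (ajY / bY)) := by
    rw [← hE4]
    exact one_dir hniX hniY hnjX hnjY haiX haiY hajX hajY hmX hmY hbX hbY hE
      cR2 cR3 cP1 cP4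
  have b2 : ajX / bX / (ajY / bY) ≤ Real.exp (4 * ε) * (aiX / bX / (aiY / bY)) := by
    rw [← hE4]
    exact one_dir hnjX hnjY hniX hniY hajX hajY haiX haiY hmX hmY hbX hbY hE
      cR4 cR1 cP3 cP2
  exact mdist_le_of_bounds (div_pos (div_pos haiX hbX) (div_pos haiY hbY)) (div_pos (div_pos hajX hbX) (div_pos hajY hbY)) b1 b2
end

section
/- Let 0 < δ and p > 0 with e^{δ/2}p ≤ 1. In the two-action decision problem where action Safe yields utility p always, and action Risky yields expected utility e^{δ/2}p conditioned on type (o,g) and e^{−δ/2}p conditioned on type (o,g'), any strategy that plays Risky with the same probability p_r for both types achieves, for at least one of the two types, expected utility at most (1/2)(1 + e^{−δ/2}) times the optimal type-dependent utility. Moreover, the bound (1/2)(1 + e^{−δ/2}) is attained exactly at p_r = 1/2. -/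
theorem fair_mixed_strategy_loss (δ p : ℝ) (hδ : 0 < δ) (hp : 0 < p)
    (hle : Real.exp (δ / 2) * p ≤ 1) :
    (∀ q : ℝ, 0 ≤ q → q ≤ 1 →
        q * (Real.exp (δ / 2) * p) + (1 - q) * p ≤
            (1 / 2) * (1 + Real.exp (-δ / 2)) * (Real.exp (δ / 2) * p) ∨
        q * (Real.exp (-δ / 2) * p) + (1 - q) * p ≤
            (1 / 2) * (1 + Real.exp (-δ / 2)) * p) ∧
    ((1 / 2) * (Real.exp (δ / 2) * p) + (1 - 1 / 2) * p =
        (1 / 2) * (1 + Real.exp (-δ / 2)) * (Real.exp (δ / 2) * p) ∧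
     (1 / 2) * (Real.exp (-δ / 2) * p) + (1 - 1 / 2) * p =
        (1 / 2) * (1 + Real.exp (-δ / 2)) * p) := by
  have hFE : Real.exp (-δ / 2) * Real.exp (δ / 2) = 1 := by
    rw [← Real.exp_add]; ring_nf; exact Real.exp_zero
  have hE1 : 1 < Real.exp (δ / 2) := by
    have := Real.exp_lt_exp.mpr (show (0:ℝ) < δ / 2 by linarith)
    simpa using this
  have hF1 : Real.exp (-δ / 2) < 1 := by
    rw [Real.exp_lt_one_iff]; linarith
  constructor
  · intro q hq0 hq1
    rcases le_or_gt q (1 / 2) with h | h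
    · left
      nlinarith [mul_nonneg (mul_nonneg (by linarith : (0:ℝ) ≤ 1 / 2 - q)
        (by linarith : (0:ℝ) ≤ Real.exp (δ / 2) - 1)) hp.le]
    · right
      nlinarith [mul_nonneg (mul_nonneg (by linarith : (0:ℝ) ≤ q - 1 / 2)
        (by linarith : (0:ℝ) ≤ 1 - Real.exp (-δ / 2))) hp.le]
  · constructor
    · nlinarith
    · ring
end

section
/- (Closure under post-processing.) If a classifier C1 satisfies ε-fair treatment with respect to context P = (D, f, g, O), then for any (possibly randomized) post-processing classifier C2 acting only on the output of C1, the composed classifier C2 ∘ C1 satisfies ε-fair treatment with respect to P. -/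
open scoped Classical
open Finset

theorem fair_treatment_post_processing {S Ψ G Θ Ω₁ Ω₂ : Type}
    [Fintype S] [Fintype Ω₁] [Fintype Ω₂]
    (D : S → ℝ) (hD : IsProb D) (f : S → Ψ) (g : S → G) (O : S → Θ)
    (C₁ : Θ → Ω₁) (ε : ℝ) (hft : FairTreatment D f g O C₁ ε)
    -- randomized post-processor: `M o₁ o₂ = Pr[C₂(o₁) = o₂]`
    (M : Ω₁ → Ω₂ → ℝ) (hM : ∀ o₁, (∀ o₂, 0 ≤ M o₁ o₂) ∧ ∑ o₂, M o₁ o₂ = 1) :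
    ∀ (X Y : G) (c : Ψ) (o₂ : Ω₂),
      mdist (∑ o₁, M o₁ o₂ * cpr D (fun σ => C₁ (O σ) = o₁) (fun σ => f σ = c ∧ g σ = X))
            (∑ o₁, M o₁ o₂ * cpr D (fun σ => C₁ (O σ) = o₁) (fun σ => f σ = c ∧ g σ = Y))
        ≤ ENNReal.ofReal ε := by
  intro X Y c o₂
  set ε' := max ε 0 with hε'def
  have hε'0 : 0 ≤ ε' := le_max_right _ _
  set k := Real.exp ε' with hkdef
  have hk0 : 0 < k := Real.exp_pos _
  set a := fun o₁ => cpr D (fun σ => C₁ (O σ) = o₁) (fun σ => f σ = c ∧ g σ = X) with ha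
  set b := fun o₁ => cpr D (fun σ => C₁ (O σ) = o₁) (fun σ => f σ = c ∧ g σ = Y) with hb
  have key : ∀ o₁, a o₁ ≤ k * b o₁ ∧ b o₁ ≤ k * a o₁ := by
    intro o₁
    have h := hft X Y c o₁
    unfold mdist at h
    by_cases h0 : a o₁ = 0 ∧ b o₁ = 0
    · rw [h0.1, h0.2]; simp
    · rw [if_neg h0] at h
      by_cases hpos : 0 < a o₁ ∧ 0 < b o₁
      · rw [if_pos hpos] at h
        obtain ⟨hax, hbx⟩ := hpos
        set m := max (a o₁ / b o₁) (b o₁ / a o₁) with hm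
        have hm1 : 1 ≤ m := by
          rcases le_total (a o₁) (b o₁) with hle | hle
          · exact le_max_of_le_right ((one_le_div hax).2 hle)
          · exact le_max_of_le_left ((one_le_div hbx).2 hle)
        have hlog : Real.log m ≤ ε' := by
          have h2 : ENNReal.ofReal (Real.log m) ≤ ENNReal.ofReal ε' :=
            le_trans h (ENNReal.ofReal_le_ofReal (le_max_left _ _))
          exact (ENNReal.ofReal_le_ofReal_iff hε'0).1 h2
        have hmk : m ≤ k := by
          have := (Real.log_le_iff_le_exp (lt_of_lt_of_le one_pos hm1)).1 hlog
          simpa [hkdef] using this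
        constructor
        · have : a o₁ / b o₁ ≤ k := le_trans (le_max_left _ _) hmk
          calc a o₁ = (a o₁ / b o₁) * b o₁ := by field_simp
            _ ≤ k * b o₁ := by
                exact mul_le_mul_of_nonneg_right this hbx.le
        · have : b o₁ / a o₁ ≤ k := le_trans (le_max_right _ _) hmk
          calc b o₁ = (b o₁ / a o₁) * a o₁ := by field_simp
            _ ≤ k * a o₁ := by
                exact mul_le_mul_of_nonneg_right this hax.le
      · rw [if_neg hpos] at h
        exact absurd (top_le_iff.1 h) (ENNReal.ofReal_ne_top)
  have hprA : ∀ (E B : S → Prop), 0 ≤ cpr D E B := by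
    intro E B
    have h : ∀ (P : S → Prop), 0 ≤ pr D P := by
      intro P
      apply Finset.sum_nonneg
      intro σ _
      split
      · exact hD.1 σ
      · exact le_refl 0
    exact div_nonneg (h _) (h _)
  have hA0 : 0 ≤ ∑ o₁, M o₁ o₂ * a o₁ := by
    apply Finset.sum_nonneg; intro o₁ _
    exact mul_nonneg ((hM o₁).1 o₂) (hprA _ _)
  have hB0 : 0 ≤ ∑ o₁, M o₁ o₂ * b o₁ := by
    apply Finset.sum_nonneg; intro o₁ _
    exact mul_nonneg ((hM o₁).1 o₂) (hprA _ _)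
  set A := ∑ o₁, M o₁ o₂ * a o₁ with hA
  set B := ∑ o₁, M o₁ o₂ * b o₁ with hB
  have hAB : A ≤ k * B := by
    rw [hA, hB, Finset.mul_sum]
    apply Finset.sum_le_sum; intro o₁ _
    calc M o₁ o₂ * a o₁ ≤ M o₁ o₂ * (k * b o₁) :=
          mul_le_mul_of_nonneg_left (key o₁).1 ((hM o₁).1 o₂)
      _ = k * (M o₁ o₂ * b o₁) := by ring
  have hBA : B ≤ k * A := by
    rw [hA, hB, Finset.mul_sum]
    apply Finset.sum_le_sum; intro o₁ _
    calc M o₁ o₂ * b o₁ ≤ M o₁ o₂ * (k * a o₁) :=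
          mul_le_mul_of_nonneg_left (key o₁).2 ((hM o₁).1 o₂)
      _ = k * (M o₁ o₂ * a o₁) := by ring
  by_cases hAz : A = 0
  · have hBz : B = 0 := le_antisymm (by simpa [hAz] using hBA) hB0
    unfold mdist
    rw [if_pos ⟨hAz, hBz⟩]
    exact zero_le
  · have hApos : 0 < A := lt_of_le_of_ne hA0 (Ne.symm hAz)
    have hBpos : 0 < B := by
      by_contra h
      push_neg at h
      have : B = 0 := le_antisymm h hB0
      have : A = 0 := le_antisymm (by simpa [this] using hAB) hA0
      exact hAz this
    unfold mdist
    rw [if_neg (by intro h; exact hAz h.1), if_pos ⟨hApos, hBpos⟩]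
    have hmk : max (A / B) (B / A) ≤ k := by
      apply max_le
      · exact (div_le_iff₀ hBpos).2 (by linarith [hAB])
      · exact (div_le_iff₀ hApos).2 (by linarith [hBA])
    have hlog : Real.log (max (A / B) (B / A)) ≤ ε' := by
      calc Real.log (max (A / B) (B / A)) ≤ Real.log k :=
            Real.log_le_log (lt_of_lt_of_le (div_pos hApos hBpos) (le_max_left _ _)) hmk
        _ = ε' := Real.log_exp _
    rcases le_or_gt 0 ε with hε | hε
    · have : ε' = ε := max_eq_left hε
      exact ENNReal.ofReal_le_ofReal (this ▸ hlog)
    · have hε'' : ε' = 0 := max_eq_right hε.le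
      rw [hε''] at hlog
      simp [ENNReal.ofReal_eq_zero.2 hlog]
end

section
/- (Splitting lemma.) Suppose C satisfies ε-fair treatment and ε-predictive parity with respect to P = (D, f, g, O), and Ψ' ⊆ Ψ_P is a set of classes such that the event C(O(σ)) ∈ Ω' holds if and only if f(σ) ∈ Ψ' for some set of outcomes Ω'. Let D' be D conditioned on f(σ) ∈ Ψ'. Then C also satisfies ε-fair treatment and ε-predictive parity with respect to the restricted context P' = (D', f, g, O). -/
open scoped Classical
open Finset

theorem splitting_lemma {S Ψ G Θ Ω : Type} [Fintype S]
    (D : S → ℝ) (hD : IsProb D) (f : S → Ψ) (g : S → G) (O : S → Θ) (C : Θ → Ω)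
    (ε : ℝ) (hft : FairTreatment D f g O C ε) (hpp : PredParity D f g O C ε)
    (Ψ' : Set Ψ) (Ω' : Set Ω)
    (hiff : ∀ σ, 0 < D σ → (C (O σ) ∈ Ω' ↔ f σ ∈ Ψ'))
    (hpos : 0 < pr D (fun σ => f σ ∈ Ψ'))
    (D' : S → ℝ)
    (hD' : ∀ σ, D' σ = if f σ ∈ Ψ' then D σ / pr D (fun τ => f τ ∈ Ψ') else 0)
    (hgrp : ∀ X : G, 0 < pr D' (fun σ => g σ = X)) :
    FairTreatment D' f g O C ε ∧ PredParity D' f g O C ε := by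

  obtain ⟨hDnn, -⟩ := hD
  set Z := pr D (fun τ => f τ ∈ Ψ') with hZdef
  have hZ0 : Z ≠ 0 := ne_of_gt hpos
  have hprD' : ∀ E : S → Prop, pr D' E = pr D (fun σ => E σ ∧ f σ ∈ Ψ') / Z := by
    intro E
    simp only [pr, hD']
    rw [Finset.sum_div]
    apply Finset.sum_congr rfl
    intro σ _
    by_cases h1 : E σ <;> by_cases h2 : f σ ∈ Ψ' <;> simp [h1, h2]
  have hdiv : ∀ a b : ℝ, (a / Z) / (b / Z) = a / b := by
    intro a b
    rcases eq_or_ne b 0 with h | h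
    · simp [h]
    · field_simp
  have hsame : ∀ E : S → Prop, (∀ σ, 0 < D σ → E σ → f σ ∈ Ψ') →
      pr D (fun σ => E σ ∧ f σ ∈ Ψ') = pr D E := by
    intro E hE
    apply Finset.sum_congr rfl
    intro σ _
    by_cases h1 : E σ
    · rcases (hDnn σ).lt_or_eq with h | h
      · simp [h1, hE σ h h1]
      · by_cases h2 : f σ ∈ Ψ' <;> simp [h1, h2, ← h]
    · simp [h1]
  have hzero : ∀ E : S → Prop, (∀ σ, 0 < D σ → E σ → f σ ∉ Ψ') →
      pr D (fun σ => E σ ∧ f σ ∈ Ψ') = 0 := by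
    intro E hE
    apply Finset.sum_eq_zero
    intro σ _
    by_cases h1 : E σ
    · rcases (hDnn σ).lt_or_eq with h | h
      · simp [h1, hE σ h h1]
      · simp [← h]
    · simp [h1]
  constructor
  · intro X Y c o
    by_cases hc : c ∈ Ψ'
    · have key : ∀ W : G, cpr D' (fun σ => C (O σ) = o) (fun σ => f σ = c ∧ g σ = W)
          = cpr D (fun σ => C (O σ) = o) (fun σ => f σ = c ∧ g σ = W) := by
        intro W
        unfold cpr
        rw [hprD', hprD', hdiv,
          hsame _ (fun σ _ h => by rw [h.2.1]; exact hc),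
          hsame _ (fun σ _ h => by rw [h.1]; exact hc)]
      rw [key X, key Y]; exact hft X Y c o
    · have key : ∀ W : G, cpr D' (fun σ => C (O σ) = o) (fun σ => f σ = c ∧ g σ = W) = 0 := by
        intro W
        unfold cpr
        rw [hprD' (fun σ => f σ = c ∧ g σ = W),
          hzero _ (fun σ _ h => by rw [h.1]; exact hc)]
        simp
      rw [key X, key Y]
      simp [mdist]
  · intro X Y o c
    by_cases ho : o ∈ Ω'
    · have himp : ∀ σ, 0 < D σ → C (O σ) = o → f σ ∈ Ψ' := fun σ h hc =>
        (hiff σ h).mp (by rw [hc]; exact ho)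
      have key : ∀ W : G, cpr D' (fun σ => f σ = c) (fun σ => C (O σ) = o ∧ g σ = W)
          = cpr D (fun σ => f σ = c) (fun σ => C (O σ) = o ∧ g σ = W) := by
        intro W
        unfold cpr
        rw [hprD', hprD', hdiv,
          hsame _ (fun σ hσ h => himp σ hσ h.2.1),
          hsame _ (fun σ hσ h => himp σ hσ h.1)]
      rw [key X, key Y]; exact hpp X Y o c
    · have key : ∀ W : G, cpr D' (fun σ => f σ = c) (fun σ => C (O σ) = o ∧ g σ = W) = 0 := by
        intro W
        unfold cpr
        rw [hprD' (fun σ => C (O σ) = o ∧ g σ = W),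
          hzero _ (fun σ hσ h hf => ho (by rw [← h.1]; exact (hiff σ hσ).mpr hf))]
        simp
      rw [key X, key Y]
      simp [mdist]
end
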